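/- arXiv:2307.15034 — 5 statements merged into one kernel-verified Lean document; each statement's English description precedes it below -/
import Mathlib

section
/- Let d, m be positive integers and set n = m^d. Let ω ∈ ℝ^d, and let v : [0,1]^d → ℝ be L-Lipschitz with respect to the Euclidean norm and satisfy |v(x)| ≤ M for all x ∈ [0,1]^d. Then for the complex Fourier basis function φ_ω(x) = e^{2πi⟨ω,x⟩}, the discretization error satisfies |∫_{[0,1]^d} v(x)·e^{2πi⟨ω,x⟩} dx − m^{-d} · Σ_{i ∈ {0,...,m−1}^d} v(i/m)·e^{2πi⟨ω, i/m⟩}| ≤ 2√d · (2π·M·‖ω‖ + L) · n^{−1/d}, where n^{−1/d} = 1/m. -/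
open MeasureTheory Real

lemma expI_sub_one (θ : ℝ) :
    ‖Complex.exp ((θ:ℂ) * Complex.I) - 1‖ ≤ |θ| := by
  have h2 : ‖Complex.exp ((θ:ℂ) * Complex.I) - 1‖
      = Real.sqrt (2 - 2 * Real.cos θ) := by
    rw [Complex.norm_def, Complex.normSq_apply]
    have hre : (Complex.exp ((θ:ℂ) * Complex.I) - 1).re = Real.cos θ - 1 := by
      simp [Complex.exp_ofReal_mul_I_re]
    have him : (Complex.exp ((θ:ℂ) * Complex.I) - 1).im = Real.sin θ := by
      simp [Complex.exp_ofReal_mul_I_im]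
    rw [hre, him]
    congr 1
    have := Real.sin_sq_add_cos_sq θ
    nlinarith
  have h3 : 2 - 2 * Real.cos θ ≤ θ ^ 2 := by
    have := Real.one_sub_sq_div_two_le_cos (x := θ)
    linarith
  rw [h2]
  calc Real.sqrt (2 - 2 * Real.cos θ) ≤ Real.sqrt (θ ^ 2) := Real.sqrt_le_sqrt h3
    _ = |θ| := Real.sqrt_sq_eq_abs θ

lemma expI_lip (a b : ℝ) :
    ‖Complex.exp ((a:ℂ) * Complex.I) - Complex.exp ((b:ℂ) * Complex.I)‖ ≤ |a - b| := by
  have h1 : Complex.exp ((a:ℂ) * Complex.I) - Complex.exp ((b:ℂ) * Complex.I)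
      = Complex.exp ((b:ℂ) * Complex.I) * (Complex.exp (((a - b : ℝ):ℂ) * Complex.I) - 1) := by
    rw [mul_sub, ← Complex.exp_add]
    push_cast; ring_nf
  rw [h1, norm_mul, Complex.norm_exp_ofReal_mul_I, one_mul]
  exact expI_sub_one (a - b)

lemma cauchy_abs {d : ℕ} (ω a : Fin d → ℝ) :
    |∑ k, ω k * a k| ≤ Real.sqrt (∑ k, (ω k)^2) * Real.sqrt (∑ k, (a k)^2) := by
  rw [abs_le]
  constructor
  · have := Real.sum_mul_le_sqrt_mul_sqrt Finset.univ ω (fun k => -a k)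
    simp only [mul_neg, Finset.sum_neg_distrib, neg_sq] at this
    linarith
  · exact Real.sum_mul_le_sqrt_mul_sqrt Finset.univ ω a

lemma fLip {d : ℕ} (ω : Fin d → ℝ) (L M : ℝ) (v : (Fin d → ℝ) → ℝ) (x y : Fin d → ℝ)
    (h1 : |v x - v y| ≤ L * Real.sqrt (∑ k, (x k - y k) ^ 2))
    (h2 : |v x| ≤ M) :
    ‖(v x : ℂ) * Complex.exp (2 * Real.pi * Complex.I * ((∑ k, ω k * x k : ℝ) : ℂ))
      - (v y : ℂ) * Complex.exp (2 * Real.pi * Complex.I * ((∑ k, ω k * y k : ℝ) : ℂ))‖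
    ≤ (2 * Real.pi * M * Real.sqrt (∑ k, (ω k)^2) + L) * Real.sqrt (∑ k, (x k - y k) ^ 2) := by
  set ex := Complex.exp (2 * Real.pi * Complex.I * ((∑ k, ω k * x k : ℝ) : ℂ)) with hex
  set ey := Complex.exp (2 * Real.pi * Complex.I * ((∑ k, ω k * y k : ℝ) : ℂ)) with hey
  have hsplit : (v x : ℂ) * ex - (v y : ℂ) * ey
      = (v x : ℂ) * (ex - ey) + ((v x : ℂ) - (v y : ℂ)) * ey := by ring
  have hexy : ‖ex - ey‖
      ≤ 2 * Real.pi * Real.sqrt (∑ k, (ω k)^2) * Real.sqrt (∑ k, (x k - y k) ^ 2) := by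
    have harg : ∀ s : ℝ, Complex.exp (2 * Real.pi * Complex.I * (s : ℂ))
        = Complex.exp (((2 * Real.pi * s : ℝ) : ℂ) * Complex.I) := by
      intro s; congr 1; push_cast; ring
    rw [hex, hey, harg, harg]
    refine (expI_lip _ _).trans ?_
    have : (2 * Real.pi * (∑ k, ω k * x k) - 2 * Real.pi * (∑ k, ω k * y k))
        = 2 * Real.pi * (∑ k, ω k * (x k - y k)) := by
      rw [Finset.mul_sum, Finset.mul_sum, Finset.mul_sum, ← Finset.sum_sub_distrib]
      exact Finset.sum_congr rfl fun k _ => by ring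
    rw [this, abs_mul, abs_of_nonneg (by positivity : (0:ℝ) ≤ 2 * Real.pi)]
    have h := mul_le_mul_of_nonneg_left (cauchy_abs ω (fun k => x k - y k)) Real.two_pi_pos.le
    linarith [h]
  have hey1 : ‖ey‖ = 1 := by
    rw [hey]
    have : (2 : ℂ) * Real.pi * Complex.I * ((∑ k, ω k * y k : ℝ) : ℂ)
        = ((2 * Real.pi * (∑ k, ω k * y k) : ℝ) : ℂ) * Complex.I := by push_cast; ring
    rw [this, Complex.norm_exp_ofReal_mul_I]
  calc ‖(v x : ℂ) * ex - (v y : ℂ) * ey‖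
      ≤ ‖(v x : ℂ) * (ex - ey)‖ + ‖((v x : ℂ) - (v y : ℂ)) * ey‖ := by
        rw [hsplit]; exact norm_add_le _ _
    _ = |v x| * ‖ex - ey‖ + |v x - v y| * 1 := by
        rw [norm_mul, norm_mul, hey1, ← Complex.ofReal_sub, Complex.norm_real, Complex.norm_real,
          Real.norm_eq_abs, Real.norm_eq_abs]
    _ ≤ M * (2 * Real.pi * Real.sqrt (∑ k, (ω k)^2) * Real.sqrt (∑ k, (x k - y k) ^ 2))
        + L * Real.sqrt (∑ k, (x k - y k) ^ 2) := by
        refine add_le_add (mul_le_mul h2 hexy (norm_nonneg _)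
          ((abs_nonneg _).trans h2)) ?_
        rw [mul_one]; exact h1
    _ = (2 * Real.pi * M * Real.sqrt (∑ k, (ω k)^2) + L) * Real.sqrt (∑ k, (x k - y k) ^ 2) := by
        ring

section Grid
variable {d m : ℕ}

/-- the subcube with corner `i/m` -/
def gridCube (m : ℕ) (i : Fin d → Fin m) : Set (Fin d → ℝ) :=
  Set.univ.pi fun k => Set.Ico ((i k : ℝ) / m) (((i k : ℝ) + 1) / m)

lemma gridCube_union (hm : 0 < m) :
    (⋃ i : Fin d → Fin m, gridCube m i) = Set.univ.pi fun _ => Set.Ico (0:ℝ) 1 := by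
  have hm' : (0:ℝ) < m := by exact_mod_cast hm
  ext x
  simp only [Set.mem_iUnion, gridCube, Set.mem_pi, Set.mem_univ, forall_true_left,
    Set.mem_Ico, true_implies]
  constructor
  · rintro ⟨i, hi⟩ k
    have h1 := (hi k).1
    have h2 := (hi k).2
    have hik : (i k : ℝ) ≤ m - 1 := by
      have : (i k : ℕ) + 1 ≤ m := (i k).2
      have : ((i k : ℕ) : ℝ) + 1 ≤ m := by exact_mod_cast this
      linarith
    constructor
    · refine le_trans ?_ h1
      positivity
    · refine lt_of_lt_of_le h2 ?_
      rw [div_le_one hm']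
      linarith
  · intro h
    refine ⟨fun k => ⟨(⌊x k * m⌋).toNat, ?_⟩, fun k => ?_⟩
    · have h0 : (0:ℤ) ≤ ⌊x k * m⌋ := Int.floor_nonneg.2 (by nlinarith [(h k).1])
      have hlt : ⌊x k * m⌋ < (m:ℤ) := Int.floor_lt.2 (by push_cast; nlinarith [(h k).2])
      omega
    · have h0 : (0:ℤ) ≤ ⌊x k * m⌋ := Int.floor_nonneg.2 (by nlinarith [(h k).1])
      have hc : (((⌊x k * m⌋).toNat : ℕ) : ℝ) = (⌊x k * m⌋ : ℝ) := by
        exact_mod_cast congrArg (Int.cast : ℤ → ℝ) (Int.toNat_of_nonneg h0)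
      constructor
      · rw [div_le_iff₀ hm']
        simp only [hc]
        exact_mod_cast Int.floor_le (x k * m)
      · rw [lt_div_iff₀ hm']
        simp only [hc]
        exact_mod_cast Int.lt_floor_add_one (x k * m)

lemma gridCube_disjoint (hm : 0 < m) :
    Pairwise (Function.onFun Disjoint (gridCube (d := d) m)) := by
  have hm' : (0:ℝ) < m := by exact_mod_cast hm
  intro i j hij
  rw [Function.onFun, Set.disjoint_left]
  intro x hxi hxj
  apply hij
  funext k
  have hi := hxi k (Set.mem_univ k)
  have hj := hxj k (Set.mem_univ k)
  simp only [Set.mem_Ico] at hi hj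
  have h1 : (i k : ℝ) < (j k : ℝ) + 1 := by
    have := lt_of_le_of_lt hi.1 hj.2
    rw [div_lt_div_iff₀ hm' hm'] at this
    nlinarith
  have h2 : (j k : ℝ) < (i k : ℝ) + 1 := by
    have := lt_of_le_of_lt hj.1 hi.2
    rw [div_lt_div_iff₀ hm' hm'] at this
    nlinarith
  have : (i k : ℕ) = (j k : ℕ) := by
    have a1 : (i k : ℕ) < (j k : ℕ) + 1 := by exact_mod_cast h1
    have a2 : (j k : ℕ) < (i k : ℕ) + 1 := by exact_mod_cast h2
    omega
  exact Fin.ext this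

lemma gridCube_subset (hm : 0 < m) (i : Fin d → Fin m) :
    gridCube m i ⊆ Set.univ.pi fun _ : Fin d => Set.Icc (0:ℝ) 1 := by
  have hm' : (0:ℝ) < m := by exact_mod_cast hm
  intro x hx k _
  have h := hx k (Set.mem_univ k)
  simp only [Set.mem_Ico] at h
  have hik : (i k : ℝ) + 1 ≤ m := by exact_mod_cast (i k).2
  constructor
  · refine le_trans ?_ h.1; positivity
  · refine le_of_lt (lt_of_lt_of_le h.2 ?_)
    rw [div_le_one hm']; linarith

lemma gridCube_volume (hm : 0 < m) (i : Fin d → Fin m) :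
    volume (gridCube m i) = ENNReal.ofReal (((m:ℝ)^d)⁻¹) := by
  have hm' : (0:ℝ) < m := by exact_mod_cast hm
  rw [gridCube, volume_pi_pi]
  have : ∀ k : Fin d, volume (Set.Ico ((i k : ℝ) / m) (((i k : ℝ) + 1) / m))
      = ENNReal.ofReal ((m:ℝ)⁻¹) := by
    intro k
    rw [Real.volume_Ico]
    congr 1
    field_simp
    ring
  simp only [this, Finset.prod_const, Finset.card_univ, Fintype.card_fin]
  rw [← ENNReal.ofReal_pow (by positivity), inv_pow]

end Grid

lemma cube_Icc_ae_Ico (d : ℕ) :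
    (Set.univ.pi fun _ : Fin d => Set.Icc (0:ℝ) 1)
      =ᵐ[volume] (Set.univ.pi fun _ : Fin d => Set.Ico (0:ℝ) 1) := by
  have h : ∀ᵐ x : Fin d → ℝ ∂volume, ∀ k, x k ≠ (1:ℝ) := by
    rw [MeasureTheory.volume_pi, MeasureTheory.ae_all_iff]
    intro k
    exact MeasureTheory.Measure.ae_eval_ne _ k 1
  filter_upwards [h] with x hx
  rw [eq_iff_iff]
  constructor
  · intro h' k _
    have := h' k (Set.mem_univ k)
    simp only [Set.mem_Icc] at this
    exact Set.mem_Ico.2 ⟨this.1, lt_of_le_of_ne this.2 (hx k)⟩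
  · intro h' k _
    have := h' k (Set.mem_univ k)
    simp only [Set.mem_Ico] at this
    exact Set.mem_Icc.2 ⟨this.1, le_of_lt this.2⟩


/-- Corner-grid discretization error bound for the complex Fourier
integrand `v(x) * e^{2πi⟨ω,x⟩}` on the unit cube `[0,1]^d`. -/
theorem cornerGrid_discretization_error_complex
    (d m : ℕ) (hd : 0 < d) (hm : 0 < m) (n : ℕ) (hn : n = m ^ d)
    (ω : Fin d → ℝ) (L M : ℝ) (v : (Fin d → ℝ) → ℝ)
    (hLip : ∀ x ∈ Set.univ.pi fun _ : Fin d => Set.Icc (0:ℝ) 1,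
      ∀ y ∈ Set.univ.pi fun _ : Fin d => Set.Icc (0:ℝ) 1,
        |v x - v y| ≤ L * Real.sqrt (∑ k, (x k - y k) ^ 2))
    (hBound : ∀ x ∈ Set.univ.pi fun _ : Fin d => Set.Icc (0:ℝ) 1, |v x| ≤ M) :
    ‖((∫ x in Set.univ.pi fun _ : Fin d => Set.Icc (0:ℝ) 1,
          (v x : ℂ) * Complex.exp (2 * Real.pi * Complex.I * ((∑ k, ω k * x k : ℝ) : ℂ))) -
        ((m : ℝ) ^ d)⁻¹ * ∑ i : Fin d → Fin m,
          (v (fun k => (i k : ℝ) / m) : ℂ) *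
            Complex.exp (2 * Real.pi * Complex.I * ((∑ k, ω k * ((i k : ℝ) / m) : ℝ) : ℂ)))‖ ≤
    2 * Real.sqrt d * (2 * π * M * Real.sqrt (∑ k, (ω k) ^ 2) + L) *
      (n : ℝ) ^ (-(1 : ℝ) / d) := by
  have hm' : (0:ℝ) < m := by exact_mod_cast hm
  have hd' : (0:ℝ) < d := by exact_mod_cast hd
  set S := Set.univ.pi fun _ : Fin d => Set.Icc (0:ℝ) 1 with hS
  set f : (Fin d → ℝ) → ℂ := fun x =>
    (v x : ℂ) * Complex.exp (2 * Real.pi * Complex.I * ((∑ k, ω k * x k : ℝ) : ℂ)) with hf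
  -- basic positivity facts
  have h0S : (fun _ : Fin d => (0:ℝ)) ∈ S := by
    intro k _; exact Set.mem_Icc.2 ⟨le_refl 0, zero_le_one⟩
  have h1S : (fun _ : Fin d => (1:ℝ)) ∈ S := by
    intro k _; exact Set.mem_Icc.2 ⟨zero_le_one, le_refl 1⟩
  have hM : 0 ≤ M := (abs_nonneg _).trans (hBound _ h0S)
  have hsqd : Real.sqrt (∑ k : Fin d, ((0:ℝ) - 1) ^ 2) = Real.sqrt d := by
    congr 1; simp
  have hL : 0 ≤ L := by
    have h := hLip _ h0S _ h1S
    rw [hsqd] at h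
    have hds : 0 < Real.sqrt d := Real.sqrt_pos.2 hd'
    nlinarith [abs_nonneg (v (fun _ : Fin d => (0:ℝ)) - v (fun _ : Fin d => (1:ℝ)))]
  set K := 2 * Real.pi * M * Real.sqrt (∑ k, (ω k)^2) + L with hK
  have hK0 : 0 ≤ K := by
    rw [hK]
    exact add_nonneg (mul_nonneg (mul_nonneg (mul_nonneg (by norm_num)
      Real.pi_pos.le) hM) (Real.sqrt_nonneg _)) hL
  -- continuity and integrability
  have hv_cont : ContinuousOn v S := by
    have hlip : LipschitzOnWith (Real.toNNReal (L * Real.sqrt d)) v S := by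
      apply LipschitzOnWith.of_dist_le_mul
      intro x hx y hy
      rw [Real.dist_eq]
      refine (hLip x hx y hy).trans ?_
      have hsum : (∑ k, (x k - y k)^2) ≤ d * (dist x y)^2 := by
        calc (∑ k, (x k - y k)^2) ≤ ∑ _k : Fin d, (dist x y)^2 := by
              apply Finset.sum_le_sum
              intro k _
              have h1 : |x k - y k| ≤ dist x y := by
                rw [← Real.dist_eq]; exact dist_le_pi_dist x y k
              nlinarith [abs_nonneg (x k - y k), sq_abs (x k - y k)]
          _ = d * (dist x y)^2 := by simp [Finset.sum_const, mul_comm]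
      have hsq : Real.sqrt (∑ k, (x k - y k)^2) ≤ Real.sqrt d * dist x y := by
        refine (Real.sqrt_le_sqrt hsum).trans ?_
        rw [Real.sqrt_mul (le_of_lt hd'), Real.sqrt_sq dist_nonneg]
      calc L * Real.sqrt (∑ k, (x k - y k)^2) ≤ L * (Real.sqrt d * dist x y) :=
            mul_le_mul_of_nonneg_left hsq hL
        _ = (Real.toNNReal (L * Real.sqrt d) : ℝ) * dist x y := by
            rw [Real.coe_toNNReal _ (by positivity)]; ring
    exact hlip.continuousOn
  have hexp_cont : Continuous (fun x : Fin d → ℝ =>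
      Complex.exp (2 * Real.pi * Complex.I * ((∑ k, ω k * x k : ℝ) : ℂ))) := by
    apply Complex.continuous_exp.comp
    apply continuous_const.mul
    exact Complex.continuous_ofReal.comp
      (continuous_finset_sum _ fun k _ => continuous_const.mul (continuous_apply k))
  have hf_cont : ContinuousOn f S :=
    (Complex.continuous_ofReal.comp_continuousOn hv_cont).mul hexp_cont.continuousOn
  have hScompact : IsCompact S := isCompact_univ_pi fun _ => isCompact_Icc
  have hf_int : IntegrableOn f S := hf_cont.integrableOn_compact hScompact
  -- decomposition of the integral
  have hUsub : (Set.univ.pi fun _ : Fin d => Set.Ico (0:ℝ) 1) ⊆ S := by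
    intro x hx k _
    have := hx k (Set.mem_univ k)
    simp only [Set.mem_Ico] at this
    exact Set.mem_Icc.2 ⟨this.1, le_of_lt this.2⟩
  have hmeas : ∀ i : Fin d → Fin m, MeasurableSet (gridCube m i) :=
    fun i => MeasurableSet.univ_pi fun k => measurableSet_Ico
  have hIntU : IntegrableOn f (⋃ i : Fin d → Fin m, gridCube m i) := by
    rw [gridCube_union hm]
    exact hf_int.mono_set hUsub
  have hdecomp : (∫ x in S, f x) = ∑ i : Fin d → Fin m, ∫ x in gridCube m i, f x := by
    rw [MeasureTheory.setIntegral_congr_set (cube_Icc_ae_Ico d), ← gridCube_union hm,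
      MeasureTheory.integral_iUnion hmeas (gridCube_disjoint hm) hIntU, tsum_fintype]
  -- corner points
  have hcT : ∀ i : Fin d → Fin m, (fun k => (i k : ℝ) / m) ∈ gridCube m i := by
    intro i k _
    refine Set.mem_Ico.2 ⟨le_refl _, ?_⟩
    exact (div_lt_div_iff_of_pos_right hm').2 (by linarith)
  have hcS : ∀ i : Fin d → Fin m, (fun k => (i k : ℝ) / m) ∈ S :=
    fun i => gridCube_subset hm i (hcT i)
  -- per-cube bound
  have key : ∀ i : Fin d → Fin m,
      ‖(∫ x in gridCube m i, f x) - (((m:ℝ)^d)⁻¹ : ℝ) • f (fun k => (i k : ℝ) / m)‖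
        ≤ K * (Real.sqrt d / m) * ((m:ℝ)^d)⁻¹ := by
    intro i
    have hvol : volume (gridCube m i) = ENNReal.ofReal (((m:ℝ)^d)⁻¹) := gridCube_volume hm i
    have hvolR : (volume (gridCube m i)).toReal = ((m:ℝ)^d)⁻¹ := by
      rw [hvol, ENNReal.toReal_ofReal (by positivity)]
    have hfin : volume (gridCube m i) < ⊤ := by
      rw [hvol]; exact ENNReal.ofReal_lt_top
    have hconst : (∫ _x in gridCube m i, f (fun k => (i k : ℝ) / m))
        = (((m:ℝ)^d)⁻¹ : ℝ) • f (fun k => (i k : ℝ) / m) := by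
      rw [MeasureTheory.setIntegral_const, measureReal_def, hvolR]
    have hint_i : IntegrableOn f (gridCube m i) := hf_int.mono_set (gridCube_subset hm i)
    have hint_c : IntegrableOn (fun _ => f (fun k => (i k : ℝ) / m)) (gridCube m i) :=
      MeasureTheory.integrableOn_const hfin.ne
    rw [← hconst, ← MeasureTheory.integral_sub hint_i hint_c]
    have hbd : ∀ x ∈ gridCube m i, ‖f x - f (fun k => (i k : ℝ) / m)‖ ≤ K * (Real.sqrt d / m) := by
      intro x hx
      have hxS : x ∈ S := gridCube_subset hm i hx
      have hfl := fLip ω L M v x (fun k => (i k : ℝ) / m)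
        (hLip x hxS _ (hcS i)) (hBound x hxS)
      rw [hf]
      refine le_trans hfl ?_
      refine mul_le_mul_of_nonneg_left ?_ hK0
      have hsum : (∑ k, (x k - (i k : ℝ) / m)^2) ≤ d * (1/m)^2 := by
        calc (∑ k, (x k - (i k : ℝ) / m)^2) ≤ ∑ _k : Fin d, (1/m : ℝ)^2 := by
              apply Finset.sum_le_sum
              intro k _
              have h := hx k (Set.mem_univ k)
              simp only [Set.mem_Ico] at h
              have h1 : 0 ≤ x k - (i k : ℝ) / m := by linarith [h.1]
              have h2 : x k - (i k : ℝ) / m < 1 / m := by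
                have : ((i k : ℝ) + 1) / m = (i k : ℝ) / m + 1 / m := by ring
                linarith [h.2, this ▸ h.2]
              nlinarith
          _ = d * (1/m : ℝ)^2 := by simp [Finset.sum_const, mul_comm]
      calc Real.sqrt (∑ k, (x k - (i k : ℝ) / m)^2) ≤ Real.sqrt (d * (1/m : ℝ)^2) :=
            Real.sqrt_le_sqrt hsum
        _ = Real.sqrt d / m := by
            rw [Real.sqrt_mul (le_of_lt hd'), Real.sqrt_sq (by positivity)]
            field_simp
    refine le_trans (MeasureTheory.norm_setIntegral_le_of_norm_le_const hfin hbd) ?_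
    rw [measureReal_def, hvolR]
  -- assembling
  have hZ : (∫ x in S, f x) - ((((m:ℝ)^d)⁻¹ : ℝ) : ℂ) *
        (∑ i : Fin d → Fin m, f (fun k => (i k : ℝ) / m))
      = ∑ i : Fin d → Fin m,
          ((∫ x in gridCube m i, f x) - (((m:ℝ)^d)⁻¹ : ℝ) • f (fun k => (i k : ℝ) / m)) := by
    rw [Finset.sum_sub_distrib, hdecomp]
    congr 1
    rw [← Finset.smul_sum, Complex.real_smul]
  have hr : (n:ℝ) ^ (-(1:ℝ)/(d:ℝ)) = (m:ℝ)⁻¹ := by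
    rw [hn]
    push_cast
    rw [← Real.rpow_natCast (m:ℝ) d, ← Real.rpow_mul (le_of_lt hm'),
      show ((d:ℕ):ℝ) * (-(1:ℝ)/(d:ℝ)) = -1 by field_simp,
      Real.rpow_neg_one]
  calc ‖(∫ x in S, f x) - ((((m:ℝ)^d)⁻¹ : ℝ) : ℂ) *
        (∑ i : Fin d → Fin m, f (fun k => (i k : ℝ) / m))‖
      = ‖∑ i : Fin d → Fin m,
          ((∫ x in gridCube m i, f x) - (((m:ℝ)^d)⁻¹ : ℝ) • f (fun k => (i k : ℝ) / m))‖ := by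
        exact congrArg _ hZ
    _ ≤ ∑ i : Fin d → Fin m,
          ‖(∫ x in gridCube m i, f x) - (((m:ℝ)^d)⁻¹ : ℝ) • f (fun k => (i k : ℝ) / m)‖ :=
        norm_sum_le _ _
    _ ≤ ∑ _i : Fin d → Fin m, K * (Real.sqrt d / m) * ((m:ℝ)^d)⁻¹ :=
        Finset.sum_le_sum fun i _ => key i
    _ = ((m:ℝ)^d) * (K * (Real.sqrt d / m) * ((m:ℝ)^d)⁻¹) := by
        rw [Finset.sum_const, Finset.card_univ]
        simp only [Fintype.card_fun, Fintype.card_fin, nsmul_eq_mul]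
        push_cast
        ring
    _ = K * (Real.sqrt d / m) := by
        field_simp
    _ ≤ 2 * Real.sqrt d * K * (n:ℝ) ^ (-(1:ℝ)/(d:ℝ)) := by
        rw [hr]
        have h1 : 0 ≤ K * (Real.sqrt d / m) := by positivity
        have h2 : K * (Real.sqrt d / m) = Real.sqrt d * K * (m:ℝ)⁻¹ := by ring
        nlinarith [Real.sqrt_nonneg (d:ℝ)]
end

section
/- There exists a constant c₂ > 0 (one may take c₂ = 4π) such that for all positive integers d, m with n = m^d, all ω ∈ ℝ^d, all M ≥ 1, all L ≥ 1, and every function v : [0,1]^d → ℝ that is L-Lipschitz with respect to the Euclidean norm and satisfies |v(x)| ≤ M for all x, the discretization error of the corner-grid rule satisfies |∫_{[0,1]^d} v(x)·e^{2πi⟨ω,x⟩} dx − m^{-d} · Σ_{i ∈ {0,...,m−1}^d} v(i/m)·e^{2πi⟨ω, i/m⟩}| ≤ c₂ · √d · (‖ω‖ + L) · M · n^{−1/d}. -/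
open MeasureTheory Real

lemma myexp_bound (θ : ℝ) :
    ‖Complex.exp (θ * Complex.I) - 1‖ ≤ |θ| := by
  have h : Complex.exp ((θ:ℂ) * Complex.I) - 1
      = Complex.ofReal (Real.cos θ - 1) + Complex.ofReal (Real.sin θ) * Complex.I := by
    rw [Complex.exp_mul_I]; push_cast; ring
  rw [h, Complex.norm_def, Complex.normSq_add_mul_I]
  have h1 : (Real.cos θ - 1) ^ 2 + Real.sin θ ^ 2 ≤ θ ^ 2 := by
    have h2 := Real.sin_sq_add_cos_sq θ
    have h3 := Real.one_sub_sq_div_two_le_cos (x := θ)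
    nlinarith
  calc Real.sqrt ((Real.cos θ - 1) ^ 2 + Real.sin θ ^ 2)
      ≤ Real.sqrt (θ ^ 2) := Real.sqrt_le_sqrt h1
    _ = |θ| := Real.sqrt_sq_eq_abs θ

lemma myexp_diff (a b : ℝ) :
    ‖Complex.exp (2 * π * Complex.I * a) - Complex.exp (2 * π * Complex.I * b)‖
      ≤ 2 * π * |a - b| := by
  have key : Complex.exp (2 * π * Complex.I * a) - Complex.exp (2 * π * Complex.I * b)
      = Complex.exp (2 * π * Complex.I * b) *
        (Complex.exp (((2 * π * (a - b) : ℝ) : ℂ) * Complex.I) - 1) := by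
    rw [mul_sub, mul_one, ← Complex.exp_add]; push_cast; ring_nf
  rw [key, norm_mul, Complex.norm_exp]
  have hre : ((2 : ℂ) * π * Complex.I * b).re = 0 := by simp
  rw [hre, Real.exp_zero, one_mul]
  calc ‖Complex.exp (((2 * π * (a - b) : ℝ) : ℂ) * Complex.I) - 1‖
      ≤ |2 * π * (a - b)| := myexp_bound _
    _ = 2 * π * |a - b| := by
        rw [abs_mul, abs_of_nonneg (by positivity : (0:ℝ) ≤ 2 * π)]

/-- There exists a universal constant `c₂ > 0` bounding the
corner-grid discretization error of the complex Fourier integrand for every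
bounded Lipschitz function on the unit cube. -/
theorem exists_const_cornerGrid_discretization_error_complex :
    ∃ c₂ : ℝ, 0 < c₂ ∧
      ∀ (d m : ℕ), 0 < d → 0 < m → ∀ (n : ℕ), n = m ^ d →
        ∀ (ω : Fin d → ℝ) (M L : ℝ), 1 ≤ M → 1 ≤ L →
          ∀ v : (Fin d → ℝ) → ℝ,
            (∀ x ∈ Set.univ.pi fun _ : Fin d => Set.Icc (0:ℝ) 1,
              ∀ y ∈ Set.univ.pi fun _ : Fin d => Set.Icc (0:ℝ) 1,
                |v x - v y| ≤ L * Real.sqrt (∑ k, (x k - y k) ^ 2)) →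
            (∀ x ∈ Set.univ.pi fun _ : Fin d => Set.Icc (0:ℝ) 1, |v x| ≤ M) →
            Norm.norm
              ((∫ x in Set.univ.pi fun _ : Fin d => Set.Icc (0:ℝ) 1,
                  (v x : ℂ) *
                    Complex.exp (2 * Real.pi * Complex.I * ((∑ k, ω k * x k : ℝ) : ℂ))) -
                ((m : ℝ) ^ d)⁻¹ * ∑ i : Fin d → Fin m,
                  (v (fun k => (i k : ℝ) / m) : ℂ) *
                    Complex.exp
                      (2 * Real.pi * Complex.I * ((∑ k, ω k * ((i k : ℝ) / m) : ℝ) : ℂ))) ≤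
            c₂ * Real.sqrt d * (Real.sqrt (∑ k, (ω k) ^ 2) + L) * M *
              (n : ℝ) ^ (-(1 : ℝ) / d) := by
  refine ⟨4 * π, by positivity, ?_⟩
  intro d m hd hm n hn ω M L hM hL v hLip hBdd
  set S : Set (Fin d → ℝ) := Set.univ.pi fun _ : Fin d => Set.Icc (0:ℝ) 1 with hS
  set f : (Fin d → ℝ) → ℂ := fun x =>
    (v x : ℂ) * Complex.exp (2 * Real.pi * Complex.I * ((∑ k, ω k * x k : ℝ) : ℂ)) with hf
  set B : (Fin d → Fin m) → Set (Fin d → ℝ) := fun i =>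
    Set.univ.pi fun k => Set.Ico ((i k : ℝ) / m) (((i k : ℝ) + 1) / m) with hB
  set c : (Fin d → Fin m) → (Fin d → ℝ) := fun i k => (i k : ℝ) / m with hc
  set W : ℝ := Real.sqrt (∑ k, (ω k) ^ 2) with hW
  have hmR : (0:ℝ) < m := by exact_mod_cast hm
  have hW0 : 0 ≤ W := Real.sqrt_nonneg _
  have hL0 : (0:ℝ) ≤ L := by linarith
  have hM0 : (0:ℝ) ≤ M := by linarith
  -- basic set facts
  have hBS : ∀ i, B i ⊆ S := by
    intro i x hx k _
    have hk := hx k (Set.mem_univ k)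
    simp only [Set.mem_Ico] at hk
    have h1 : (0:ℝ) ≤ (i k : ℝ) / m := by positivity
    have h2 : ((i k : ℝ) + 1) / m ≤ 1 := by
      rw [div_le_one hmR]
      have : ((i k : ℕ) + 1 : ℕ) ≤ m := Nat.succ_le_of_lt (i k).isLt
      exact_mod_cast this
    exact ⟨le_trans h1 hk.1, le_of_lt (lt_of_lt_of_le hk.2 h2)⟩
  have hcS : ∀ i, c i ∈ S := by
    intro i k _
    refine ⟨by positivity, ?_⟩
    rw [div_le_one hmR]
    exact_mod_cast le_of_lt (i k).isLt
  have hBmeas : ∀ i, MeasurableSet (B i) := fun i =>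
    MeasurableSet.univ_pi fun k => measurableSet_Ico
  have hSmeas : MeasurableSet S := MeasurableSet.univ_pi fun k => measurableSet_Icc
  have hvolB : ∀ i, volume (B i) = ENNReal.ofReal (((m:ℝ)^d)⁻¹) := by
    intro i
    rw [hB]
    rw [volume_pi_pi]
    have hIco : ∀ k : Fin d,
        volume (Set.Ico ((i k : ℝ)/m) (((i k:ℝ)+1)/m)) = ENNReal.ofReal ((m:ℝ)⁻¹) := by
      intro k
      rw [Real.volume_Ico]
      congr 1
      field_simp; ring
    simp only [hIco]
    rw [Finset.prod_const, Finset.card_univ, Fintype.card_fin,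
      ← ENNReal.ofReal_pow (by positivity), inv_pow]
  have hvolBreal : ∀ i, (volume (B i)).toReal = ((m:ℝ)^d)⁻¹ := fun i => by
    rw [hvolB i, ENNReal.toReal_ofReal (by positivity)]
  have hvolBtop : ∀ i, volume (B i) < ⊤ := fun i => by
    rw [hvolB i]; exact ENNReal.ofReal_lt_top
  have hvolS : volume S = 1 := by
    rw [hS, volume_pi_pi]
    simp [Real.volume_Icc]
  -- norm of f
  have habs1 : ∀ t : ℝ, ‖Complex.exp (2 * Real.pi * Complex.I * (t:ℂ))‖ = 1 := by
    intro t
    rw [Complex.norm_exp]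
    have : ((2:ℂ) * Real.pi * Complex.I * (t:ℂ)).re = 0 := by simp
    rw [this, Real.exp_zero]
  have hnorm : ∀ x ∈ S, ‖f x‖ ≤ M := by
    intro x hx
    have : ‖f x‖ = |v x| * 1 := by
      rw [hf]
      simp only [norm_mul, Complex.norm_real, Real.norm_eq_abs, habs1]
    rw [this, mul_one]
    exact hBdd x hx
  -- measurability / integrability
  have hvlip : LipschitzOnWith (Real.toNNReal (L * Real.sqrt d)) v S := by
    apply LipschitzOnWith.of_dist_le_mul
    intro x hx y hy
    rw [Real.dist_eq, Real.coe_toNNReal _ (by positivity)]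
    have hsum : (∑ k, (x k - y k) ^ 2) ≤ d * (dist x y)^2 := by
      calc (∑ k, (x k - y k) ^ 2) ≤ ∑ _k : Fin d, (dist x y)^2 := by
            apply Finset.sum_le_sum
            intro k _
            have h1 : |x k - y k| ≤ dist x y := by
              rw [← Real.dist_eq]; exact dist_le_pi_dist x y k
            nlinarith [abs_nonneg (x k - y k), le_abs_self (x k - y k),
              neg_abs_le (x k - y k)]
          _ = d * (dist x y)^2 := by
            rw [Finset.sum_const, Finset.card_univ, Fintype.card_fin, nsmul_eq_mul]
    calc |v x - v y| ≤ L * Real.sqrt (∑ k, (x k - y k) ^ 2) := hLip x hx y hy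
      _ ≤ L * Real.sqrt (d * (dist x y)^2) :=
          mul_le_mul_of_nonneg_left (Real.sqrt_le_sqrt hsum) hL0
      _ = L * (Real.sqrt d * dist x y) := by
          rw [Real.sqrt_mul (by positivity), Real.sqrt_sq dist_nonneg]
      _ = L * Real.sqrt d * dist x y := by ring
  have hfcont : ContinuousOn f S := by
    apply ContinuousOn.mul
    · exact Complex.continuous_ofReal.comp_continuousOn hvlip.continuousOn
    · apply Continuous.continuousOn
      apply Complex.continuous_exp.comp
      apply Continuous.mul continuous_const
      exact Complex.continuous_ofReal.comp (continuous_finset_sum _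
        fun k _ => (continuous_const.mul (continuous_apply k)))
  have hmble : AEStronglyMeasurable f (volume.restrict S) :=
    hfcont.aestronglyMeasurable hSmeas
  have hInt : IntegrableOn f S := by
    refine ⟨hmble, HasFiniteIntegral.restrict_of_bounded (C := M) ?_ ?_⟩
    · rw [hvolS]; exact ENNReal.one_lt_top
    · exact (ae_restrict_iff' hSmeas).2 (Filter.Eventually.of_forall hnorm)
  -- decomposition of the cube
  have hUnion : (Set.univ.pi fun _ : Fin d => Set.Ico (0:ℝ) 1) = ⋃ i, B i := by
    ext x
    simp only [Set.mem_pi, Set.mem_univ, forall_true_left, Set.mem_iUnion, Set.mem_Ico, hB]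
    constructor
    · intro hx
      have hlt : ∀ k, ⌊(m:ℝ) * x k⌋₊ < m := by
        intro k
        rw [Nat.floor_lt (by nlinarith [(hx k).1])]
        nlinarith [(hx k).2]
      refine ⟨fun k => ⟨⌊(m:ℝ) * x k⌋₊, hlt k⟩, fun k => ?_⟩
      constructor
      · rw [div_le_iff₀ hmR]
        calc ((⌊(m:ℝ) * x k⌋₊ : ℝ)) ≤ (m:ℝ) * x k := Nat.floor_le (by nlinarith [(hx k).1])
          _ = x k * m := mul_comm _ _
      · rw [lt_div_iff₀ hmR]
        calc x k * m = (m:ℝ) * x k := mul_comm _ _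
          _ < ⌊(m:ℝ) * x k⌋₊ + 1 := Nat.lt_floor_add_one _
    · rintro ⟨i, hi⟩ k
      have hk := hi k
      have h1 : (0:ℝ) ≤ (i k : ℝ) / m := by positivity
      have h2 : ((i k : ℝ) + 1) / m ≤ 1 := by
        rw [div_le_one hmR]
        have : ((i k : ℕ) + 1 : ℕ) ≤ m := Nat.succ_le_of_lt (i k).isLt
        exact_mod_cast this
      exact ⟨le_trans h1 hk.1, lt_of_lt_of_le hk.2 h2⟩
  have hdisj : Pairwise (Function.onFun Disjoint B) := by
    intro i j hij
    obtain ⟨k, hk⟩ := Function.ne_iff.1 hij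
    refine Set.disjoint_left.2 fun x hxi hxj => ?_
    have h1 := hxi k (Set.mem_univ k)
    have h2 := hxj k (Set.mem_univ k)
    simp only [Set.mem_Ico] at h1 h2
    rcases lt_or_gt_of_ne hk with h | h
    · have hle : ((i k : ℝ) + 1) ≤ (j k : ℝ) := by
        have := Fin.lt_def.1 h
        exact_mod_cast Nat.succ_le_of_lt this
      have := (div_le_div_iff_of_pos_right hmR).2 hle
      linarith [h1.2, h2.1]
    · have hle : ((j k : ℝ) + 1) ≤ (i k : ℝ) := by
        have := Fin.lt_def.1 h
        exact_mod_cast Nat.succ_le_of_lt this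
      have := (div_le_div_iff_of_pos_right hmR).2 hle
      linarith [h2.2, h1.1]
  have hTS : (⋃ i, B i) ⊆ S := Set.iUnion_subset hBS
  have hvolT : volume (⋃ i, B i) = 1 := by
    rw [← hUnion, volume_pi_pi]
    simp [Real.volume_Ico]
  have haeeq : S =ᵐ[volume] ⋃ i, B i := by
    rw [MeasureTheory.ae_eq_set]
    constructor
    · rw [measure_diff hTS (MeasurableSet.iUnion hBmeas).nullMeasurableSet
        (by rw [hvolT]; exact ENNReal.one_ne_top), hvolS, hvolT, tsub_self]
    · rw [Set.diff_eq_empty.2 hTS, measure_empty]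
  have hsplit : (∫ x in S, f x) = ∑ i : Fin d → Fin m, ∫ x in B i, f x := by
    rw [setIntegral_congr_set haeeq,
      integral_iUnion hBmeas hdisj (hInt.congr_set_ae haeeq.symm), tsum_fintype]
  -- pointwise bound on each box
  set E : ℝ := (L + 2 * π * M * W) * Real.sqrt d / m with hE
  have hpt : ∀ i, ∀ x ∈ B i, ‖f x - f (c i)‖ ≤ E := by
    intro i x hx
    have hxS := hBS i hx
    have hciS := hcS i
    have hcoord : ∀ k, 0 ≤ x k - c i k ∧ x k - c i k < 1 / m := by
      intro k
      have hk := hx k (Set.mem_univ k)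
      simp only [Set.mem_Ico] at hk
      have hcik : c i k = (i k : ℝ) / m := rfl
      constructor
      · rw [hcik]; linarith [hk.1]
      · rw [hcik]
        have : ((i k:ℝ)+1)/m = (i k:ℝ)/m + 1/m := by ring
        linarith [hk.2, this ▸ hk.2]
    have hdistxc : Real.sqrt (∑ k, (x k - c i k) ^ 2) ≤ Real.sqrt d / m := by
      have hsum : (∑ k, (x k - c i k) ^ 2) ≤ (d:ℝ) * (1/(m:ℝ))^2 := by
        calc (∑ k, (x k - c i k)^2) ≤ ∑ _k : Fin d, (1/(m:ℝ))^2 := by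
              apply Finset.sum_le_sum
              intro k _
              nlinarith [(hcoord k).1, (hcoord k).2]
          _ = (d:ℝ) * (1/(m:ℝ))^2 := by
              rw [Finset.sum_const, Finset.card_univ, Fintype.card_fin, nsmul_eq_mul]
      calc Real.sqrt (∑ k, (x k - c i k) ^ 2) ≤ Real.sqrt ((d:ℝ) * (1/(m:ℝ))^2) :=
            Real.sqrt_le_sqrt hsum
        _ = Real.sqrt d * (1/m) := by
            rw [Real.sqrt_mul (by positivity), Real.sqrt_sq (by positivity)]
        _ = Real.sqrt d / m := by ring
    have hvdiff : |v x - v (c i)| ≤ L * (Real.sqrt d / m) :=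
      le_trans (hLip x hxS (c i) hciS) (mul_le_mul_of_nonneg_left hdistxc hL0)
    have hinner : |(∑ k, ω k * x k) - (∑ k, ω k * c i k)| ≤ W * (Real.sqrt d / m) := by
      have h1 : (∑ k, ω k * x k) - (∑ k, ω k * c i k) = ∑ k, ω k * (x k - c i k) := by
        rw [← Finset.sum_sub_distrib]
        exact Finset.sum_congr rfl fun k _ => by ring
      rw [h1]
      have hcs := Finset.sum_mul_sq_le_sq_mul_sq Finset.univ ω (fun k => x k - c i k)
      have habs2 : |∑ k, ω k * (x k - c i k)| ≤ W * Real.sqrt (∑ k, (x k - c i k)^2) := by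
        rw [← Real.sqrt_sq_eq_abs, hW, ← Real.sqrt_mul (by positivity)]
        exact Real.sqrt_le_sqrt hcs
      exact le_trans habs2 (mul_le_mul_of_nonneg_left hdistxc hW0)
    have hexp : ‖
        (Complex.exp (2 * Real.pi * Complex.I * ((∑ k, ω k * x k : ℝ) : ℂ))
          - Complex.exp (2 * Real.pi * Complex.I * ((∑ k, ω k * c i k : ℝ) : ℂ)))‖
        ≤ 2 * π * (W * (Real.sqrt d / m)) := by
      refine le_trans (myexp_diff _ _) ?_
      exact mul_le_mul_of_nonneg_left hinner (by positivity)
    have hsplit2 : f x - f (c i)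
        = ((v x : ℂ) - (v (c i) : ℂ)) *
            Complex.exp (2 * Real.pi * Complex.I * ((∑ k, ω k * x k : ℝ) : ℂ))
          + (v (c i) : ℂ) *
            (Complex.exp (2 * Real.pi * Complex.I * ((∑ k, ω k * x k : ℝ) : ℂ))
              - Complex.exp (2 * Real.pi * Complex.I * ((∑ k, ω k * c i k : ℝ) : ℂ))) := by
      rw [hf]; ring
    calc ‖f x - f (c i)‖ ≤ ‖((v x : ℂ) - (v (c i) : ℂ)) *
            Complex.exp (2 * Real.pi * Complex.I * ((∑ k, ω k * x k : ℝ) : ℂ))‖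
          + ‖(v (c i) : ℂ) *
            (Complex.exp (2 * Real.pi * Complex.I * ((∑ k, ω k * x k : ℝ) : ℂ))
              - Complex.exp (2 * Real.pi * Complex.I * ((∑ k, ω k * c i k : ℝ) : ℂ)))‖ := by
          rw [hsplit2]; exact norm_add_le _ _
      _ ≤ |v x - v (c i)| * 1 + M * (2 * π * (W * (Real.sqrt d / m))) := by
          apply add_le_add
          · refine le_of_eq ?_
            rw [norm_mul, ← Complex.ofReal_sub, Complex.norm_real, Real.norm_eq_abs,
              habs1]
          · rw [norm_mul, Complex.norm_real, Real.norm_eq_abs]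
            exact mul_le_mul (hBdd _ hciS) hexp (norm_nonneg _) hM0
      _ ≤ L * (Real.sqrt d / m) + M * (2 * π * (W * (Real.sqrt d / m))) :=
          add_le_add (by rw [mul_one]; exact hvdiff) le_rfl
      _ = E := by rw [hE]; ring
  -- per-box error
  have hbox : ∀ i, ‖(∫ x in B i, f x) - ((((m:ℝ)^d)⁻¹ : ℝ) : ℂ) * f (c i)‖
      ≤ E * ((m:ℝ)^d)⁻¹ := by
    intro i
    have hInti : IntegrableOn f (B i) := hInt.mono_set (hBS i)
    have hIntc : IntegrableOn (fun _ => f (c i)) (B i) :=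
      integrableOn_const (hvolBtop i).ne
    have heq : (∫ x in B i, f x) - ((((m:ℝ)^d)⁻¹ : ℝ) : ℂ) * f (c i)
        = ∫ x in B i, (f x - f (c i)) := by
      rw [integral_sub hInti hIntc, setIntegral_const, measureReal_def, hvolBreal i, Complex.real_smul]
    rw [heq]
    calc ‖∫ x in B i, (f x - f (c i))‖ ≤ E * (volume (B i)).toReal :=
        norm_setIntegral_le_of_norm_le_const (hvolBtop i) (hpt i)
      _ = E * ((m:ℝ)^d)⁻¹ := by rw [hvolBreal]
  -- assemble
  have hmain : ‖(∫ x in S, f x) - ((((m:ℝ)^d)⁻¹ : ℝ) : ℂ) * ∑ i : Fin d → Fin m, f (c i)‖ ≤ E := by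
    have hkey : (∫ x in S, f x) - ((((m:ℝ)^d)⁻¹ : ℝ) : ℂ) * ∑ i : Fin d → Fin m, f (c i)
        = ∑ i : Fin d → Fin m, ((∫ x in B i, f x) - ((((m:ℝ)^d)⁻¹ : ℝ) : ℂ) * f (c i)) := by
      rw [hsplit, Finset.mul_sum, Finset.sum_sub_distrib]
    rw [hkey]
    calc ‖∑ i : Fin d → Fin m, ((∫ x in B i, f x) - ((((m:ℝ)^d)⁻¹ : ℝ) : ℂ) * f (c i))‖
        ≤ ∑ i : Fin d → Fin m, ‖(∫ x in B i, f x) - ((((m:ℝ)^d)⁻¹ : ℝ) : ℂ) * f (c i)‖ :=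
          norm_sum_le _ _
      _ ≤ ∑ _i : Fin d → Fin m, E * ((m:ℝ)^d)⁻¹ := Finset.sum_le_sum fun i _ => hbox i
      _ = (m^d : ℕ) * (E * ((m:ℝ)^d)⁻¹) := by
          rw [Finset.sum_const, Finset.card_univ, nsmul_eq_mul]
          congr 1
          simp [Fintype.card_fun]
      _ = E := by
          push_cast
          field_simp
  -- rpow computation
  have hrpow : ((n:ℝ)) ^ (-(1:ℝ)/d) = (m:ℝ)⁻¹ := by
    rw [hn]
    push_cast
    rw [← Real.rpow_natCast (m:ℝ) d, ← Real.rpow_mul (le_of_lt hmR),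
      show (d:ℝ) * (-(1:ℝ)/d) = -1 by
        field_simp,
      Real.rpow_neg_one]
  -- final comparison
  have hcoef : (L + 2 * π * M * W) ≤ 4 * π * (W + L) * M := by
    nlinarith [mul_nonneg (mul_nonneg Real.pi_pos.le hM0) hW0,
      mul_nonneg (sub_nonneg.2 hM) hL0,
      mul_nonneg (sub_nonneg.2 Real.pi_gt_three.le) (mul_nonneg hL0 hM0), hL0]
  show ‖(∫ x in S, f x) - ((((m:ℝ)^d)⁻¹ : ℝ) : ℂ) * ∑ i : Fin d → Fin m, f (c i)‖
      ≤ 4 * π * Real.sqrt d * (W + L) * M * (n:ℝ) ^ (-(1:ℝ)/d)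
  calc ‖(∫ x in S, f x) - ((((m:ℝ)^d)⁻¹ : ℝ) : ℂ) * ∑ i : Fin d → Fin m, f (c i)‖ ≤ E := hmain
    _ = (L + 2 * π * M * W) * (Real.sqrt d * (m:ℝ)⁻¹) := by rw [hE]; ring
    _ ≤ (4 * π * (W + L) * M) * (Real.sqrt d * (m:ℝ)⁻¹) :=
        mul_le_mul_of_nonneg_right hcoef (by positivity)
    _ = 4 * π * Real.sqrt d * (W + L) * M * (m:ℝ)⁻¹ := by ring
    _ = 4 * π * Real.sqrt d * (W + L) * M * ((n:ℝ)) ^ (-(1:ℝ)/d) := by rw [hrpow]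
end

section
/- For every real x with 0 < x < π, the cotangent satisfies cot(x) < 1/x − x/3 (equivalently, x·cot(x) < 1 − x²/3). -/
open Real

private lemma sin_sub_mul_cos_pos {x : ℝ} (hx : 0 < x) (hxπ : x < π) :
    0 < Real.sin x - x * Real.cos x := by
  set h : ℝ → ℝ := fun y => Real.sin y - y * Real.cos y with hh
  have hderiv : ∀ y : ℝ, HasDerivAt h (y * Real.sin y) y := by
    intro y
    have h1 : HasDerivAt (fun y : ℝ => Real.sin y) (Real.cos y) y := Real.hasDerivAt_sin y
    have h2 : HasDerivAt (fun y : ℝ => y * Real.cos y)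
        (1 * Real.cos y + y * (-Real.sin y)) y :=
      (hasDerivAt_id y).mul (Real.hasDerivAt_cos y)
    have := h1.sub h2
    refine this.congr_deriv ?_
    ring
  have hmono : StrictMonoOn h (Set.Icc 0 π) := by
    apply strictMonoOn_of_deriv_pos (convex_Icc 0 π)
    · exact (Real.continuous_sin.sub (continuous_id.mul Real.continuous_cos)).continuousOn
    · intro y hy
      rw [interior_Icc] at hy
      rw [(hderiv y).deriv]
      exact mul_pos hy.1 (Real.sin_pos_of_pos_of_lt_pi hy.1 hy.2)
  have := hmono (Set.left_mem_Icc.mpr (le_of_lt Real.pi_pos))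
    ⟨le_of_lt hx, le_of_lt hxπ⟩ hx
  simpa [hh] using this

private lemma key_ineq {x : ℝ} (hx : 0 < x) (hxπ : x < π) :
    0 < Real.sin x - x ^ 2 * Real.sin x / 3 - x * Real.cos x := by
  set g : ℝ → ℝ := fun y => Real.sin y - y ^ 2 * Real.sin y / 3 - y * Real.cos y with hg
  have hderiv : ∀ y : ℝ, HasDerivAt g (y / 3 * (Real.sin y - y * Real.cos y)) y := by
    intro y
    have h1 : HasDerivAt (fun y : ℝ => Real.sin y) (Real.cos y) y := Real.hasDerivAt_sin y
    have h2 : HasDerivAt (fun y : ℝ => y ^ 2 * Real.sin y / 3)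
        ((2 * y ^ 1 * Real.sin y + y ^ 2 * Real.cos y) / 3) y := by
      exact (((hasDerivAt_pow 2 y).mul (Real.hasDerivAt_sin y)).div_const 3)
    have h3 : HasDerivAt (fun y : ℝ => y * Real.cos y)
        (1 * Real.cos y + y * (-Real.sin y)) y :=
      (hasDerivAt_id y).mul (Real.hasDerivAt_cos y)
    have := (h1.sub h2).sub h3
    refine this.congr_deriv ?_
    ring
  have hmono : StrictMonoOn g (Set.Icc 0 π) := by
    apply strictMonoOn_of_deriv_pos (convex_Icc 0 π)
    · apply ContinuousOn.sub
      apply ContinuousOn.sub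
      · exact Real.continuous_sin.continuousOn
      · exact (((continuous_pow 2).mul Real.continuous_sin).div_const 3).continuousOn
      · exact (continuous_id.mul Real.continuous_cos).continuousOn
    · intro y hy
      rw [interior_Icc] at hy
      rw [(hderiv y).deriv]
      exact mul_pos (by linarith [hy.1]) (sin_sub_mul_cos_pos hy.1 hy.2)
  have := hmono (Set.left_mem_Icc.mpr (le_of_lt Real.pi_pos))
    ⟨le_of_lt hx, le_of_lt hxπ⟩ hx
  simpa [hg] using this

/-- For `0 < x < π`, `cot x < 1/x − x/3`. -/
theorem cot_lt_one_div_sub_third (x : ℝ) (hx : 0 < x) (hxπ : x < π) :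
    Real.cot x < 1 / x - x / 3 := by
  have hs : 0 < Real.sin x := Real.sin_pos_of_pos_of_lt_pi hx hxπ
  have key := key_ineq hx hxπ
  rw [Real.cot_eq_cos_div_sin, div_lt_iff₀ hs,
    show (1 / x - x / 3) * Real.sin x = (Real.sin x - x ^ 2 * Real.sin x / 3) / x by
      field_simp,
    lt_div_iff₀ hx]
  linarith
end

section
/- Let d be a positive integer and m ≥ 2 an integer. Then the corner-grid quadrature sum of the function v(x) = ∏_{k=1}^{d} x_k·sin(2π x_k) satisfies m^{-d} · Σ_{i ∈ {0,...,m−1}^d} ∏_{k=1}^{d} ( (i_k/m)·sin(2π i_k/m) ) = ( −cot(π/m)/(2m) )^d. -/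
open Real Finset

lemma aux_geom (z : ℂ) (n : ℕ) :
    (z - 1) * ∑ j ∈ range n, (j : ℂ) * z ^ j =
      ((n : ℂ) - 1) * z ^ n - (∑ j ∈ range n, z ^ j) + 1 := by
  induction n with
  | zero => simp
  | succ n ih =>
    rw [sum_range_succ, sum_range_succ, mul_add, ih]
    push_cast
    ring

lemma key_sum (m : ℕ) (hm : 2 ≤ m) :
    ∑ j ∈ range m, (j : ℝ) * Real.sin (2 * π * j / m) =
      -(m : ℝ) * Real.cot (π / m) / 2 := by
  have hm0 : (m : ℝ) ≠ 0 := by positivity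
  have hs : 0 < Real.sin (π / m) := by
    apply Real.sin_pos_of_pos_of_lt_pi
    · positivity
    · rw [div_lt_iff₀ (by positivity)]
      have hm2 : (2:ℝ) ≤ m := by exact_mod_cast hm
      nlinarith [Real.pi_pos, mul_nonneg Real.pi_pos.le (sub_nonneg.mpr hm2)]
  set s := Real.sin (π / m) with hs_def
  set c := Real.cos (π / m) with hc_def
  set z : ℂ := Complex.exp ((2 * π / m : ℝ) * Complex.I) with hz_def
  have hzre : z.re = Real.cos (2 * π / m) := Complex.exp_ofReal_mul_I_re _
  have hzim : z.im = Real.sin (2 * π / m) := Complex.exp_ofReal_mul_I_im _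
  have h2 : (2 * π / m : ℝ) = 2 * (π / m) := by ring
  have hcos2 : Real.cos (2 * π / m) = 1 - 2 * s ^ 2 := by
    rw [h2, Real.cos_two_mul']
    have := Real.sin_sq_add_cos_sq (π / m)
    simp only [hs_def, hc_def] at *
    linarith
  have hsin2 : Real.sin (2 * π / m) = 2 * s * c := by
    rw [h2, Real.sin_two_mul]
  have hz1 : z ≠ 1 := by
    intro h
    have : z.re = 1 := by rw [h]; simp
    rw [hzre, hcos2] at this
    nlinarith
  have hzm : z ^ m = 1 := by
    rw [hz_def, ← Complex.exp_nat_mul]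
    have : (m : ℂ) * ((2 * π / m : ℝ) * Complex.I) = 2 * π * Complex.I := by
      have hmc : (m : ℂ) ≠ 0 := Nat.cast_ne_zero.mpr (by omega)
      push_cast
      field_simp
    rw [this, Complex.exp_two_pi_mul_I]
  have hgeom : ∑ j ∈ range m, z ^ j = 0 := by
    rw [geom_sum_eq hz1, hzm]; simp
  have hzne : z - 1 ≠ 0 := sub_ne_zero.mpr hz1
  have hS : ∑ j ∈ range m, (j : ℂ) * z ^ j = (m : ℂ) / (z - 1) := by
    rw [eq_div_iff hzne, mul_comm, aux_geom, hzm, hgeom]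
    ring
  have him : (∑ j ∈ range m, (j : ℂ) * z ^ j).im
      = ∑ j ∈ range m, (j : ℝ) * Real.sin (2 * π * j / m) := by
    rw [Complex.im_sum]
    refine Finset.sum_congr rfl fun j _ => ?_
    have : z ^ j = Complex.exp ((2 * π * j / m : ℝ) * Complex.I) := by
      rw [hz_def, ← Complex.exp_nat_mul]
      congr 1
      push_cast
      ring
    rw [this, Complex.mul_im, Complex.exp_ofReal_mul_I_im]
    simp
  have hnormSq : Complex.normSq (z - 1) = 4 * s ^ 2 := by
    rw [Complex.normSq_apply]
    simp only [Complex.sub_re, Complex.sub_im, Complex.one_re, Complex.one_im,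
      hzre, hzim, hcos2, hsin2]
    have hpy : s ^ 2 + c ^ 2 = 1 := Real.sin_sq_add_cos_sq _
    nlinarith
  have hdivim : ((m : ℂ) / (z - 1)).im = -(m : ℝ) * Real.cot (π / m) / 2 := by
    rw [div_eq_mul_inv, Complex.mul_im, Complex.inv_im, Complex.inv_re]
    simp only [Complex.natCast_re, Complex.natCast_im, hnormSq, Complex.sub_im,
      Complex.one_im, hzim, hsin2]
    rw [Real.cot_eq_cos_div_sin, ← hc_def, ← hs_def]
    have hs0 : s ≠ 0 := hs.ne'
    field_simp
    ring
  rw [← him, hS, hdivim]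

/-- The corner-grid quadrature sum of
`v(x) = ∏_k x_k·sin(2π x_k)` equals `(−cot(π/m)/(2m))^d`. -/
theorem cornerGrid_sum_prod_x_sin (d m : ℕ) (hd : 0 < d) (hm : 2 ≤ m) :
    ((m : ℝ) ^ d)⁻¹ * ∑ i : Fin d → Fin m,
        ∏ k : Fin d, ((i k : ℝ) / m * Real.sin (2 * π * (i k : ℝ) / m)) =
      (-Real.cot (π / m) / (2 * m)) ^ d := by
  have hm0 : (m : ℝ) ≠ 0 := by positivity
  have hsum : ∑ i : Fin d → Fin m,
      ∏ k : Fin d, ((i k : ℝ) / m * Real.sin (2 * π * (i k : ℝ) / m))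
      = (∑ j : Fin m, ((j : ℝ) / m * Real.sin (2 * π * (j : ℝ) / m))) ^ d := by
    rw [Fintype.sum_pow]
  have h1d : ∑ j : Fin m, ((j : ℝ) / m * Real.sin (2 * π * (j : ℝ) / m))
      = -Real.cot (π / m) / 2 := by
    rw [Fin.sum_univ_eq_sum_range (fun j => ((j : ℝ) / m * Real.sin (2 * π * (j : ℝ) / m)))]
    have : ∑ j ∈ range m, ((j : ℝ) / m * Real.sin (2 * π * (j : ℝ) / m))
        = (∑ j ∈ range m, (j : ℝ) * Real.sin (2 * π * j / m)) / m := by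
      rw [Finset.sum_div]
      exact Finset.sum_congr rfl fun j _ => by ring
    rw [this, key_sum m hm]
    field_simp
  rw [hsum, h1d, ← inv_pow, ← mul_pow]
  congr 1
  rw [mul_comm, ← div_eq_mul_inv, div_div]
end

section
/- Let d, m be positive integers, ω ∈ ℝ^d, ε > 0, and M > 0. Let v : [0,1]^d → ℝ satisfy |v(x)| ≤ M for all x ∈ [0,1]^d, and let q : ℝ → ℝ be a rounding map with relative error ε, i.e., |q(x) − x| ≤ ε·|x| for all x ∈ ℝ; extend q to ℂ by applying it separately to real and imaginary parts, q̃(z) = q(Re z) + i·q(Im z). Then the precision error of the corner-grid sum for the complex Fourier integrand satisfies | m^{-d} · Σ_{i ∈ {0,...,m−1}^d} v(i/m)·e^{2πi⟨ω, i/m⟩} − m^{-d} · Σ_{i ∈ {0,...,m−1}^d} q(v(i/m))·q̃(e^{2πi⟨ω, i/m⟩}) | ≤ 2·(2 + ε)·ε·M. In particular there is a constant c > 0 with precision error at most c·ε·M, so for fixed ε the precision error does not grow with the mesh size n = m^d. -/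
open Real Finset

lemma term_bound_aux (ε M : ℝ) (hε : 0 < ε) (hM : 0 < M) (q : ℝ → ℝ)
    (hq : ∀ x : ℝ, |q x - x| ≤ ε * |x|) (a θ : ℝ) (ha : |a| ≤ M) :
    Norm.norm ((a : ℂ) * Complex.exp (2 * Real.pi * Complex.I * (θ : ℂ)) -
      (q a : ℂ) * ((q ((Complex.exp (2 * Real.pi * Complex.I * (θ : ℂ))).re) : ℂ) +
        (q ((Complex.exp (2 * Real.pi * Complex.I * (θ : ℂ))).im) : ℂ) * Complex.I)) ≤
    2 * (2 + ε) * ε * M := by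
  set e := Complex.exp (2 * Real.pi * Complex.I * (θ : ℂ)) with he
  have habs : Norm.norm e = 1 := by
    rw [he, Complex.norm_exp]
    simp
  have hre : |e.re| ≤ 1 := by
    have := Complex.abs_re_le_norm e; rw [habs] at this; exact this
  have him : |e.im| ≤ 1 := by
    have := Complex.abs_im_le_norm e; rw [habs] at this; exact this
  set qt : ℂ := (q e.re : ℂ) + (q e.im : ℂ) * Complex.I with hqt
  have hsplit : (a : ℂ) * e - (q a : ℂ) * qt
      = ((a : ℂ) - (q a : ℂ)) * e + (q a : ℂ) * (e - qt) := by ring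
  have h1 : Norm.norm (((a : ℂ) - (q a : ℂ)) * e) ≤ ε * M := by
    rw [norm_mul, habs, mul_one]
    have : ((a : ℂ) - (q a : ℂ)) = ((a - q a : ℝ) : ℂ) := by push_cast; ring
    rw [this, Complex.norm_real, Real.norm_eq_abs, abs_sub_comm]
    calc |q a - a| ≤ ε * |a| := hq a
      _ ≤ ε * M := by nlinarith
  have h2 : Norm.norm (e - qt) ≤ 2 * ε := by
    have := Complex.norm_le_abs_re_add_abs_im (e - qt)
    have hrw : (e - qt).re = e.re - q e.re ∧ (e - qt).im = e.im - q e.im := by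
      constructor <;> simp [hqt]
    rw [hrw.1, hrw.2] at this
    have hr := hq e.re
    have hi := hq e.im
    rw [abs_sub_comm] at hr hi
    have : Norm.norm (e - qt) ≤ ε * |e.re| + ε * |e.im| := by
      calc Norm.norm (e - qt) ≤ |e.re - q e.re| + |e.im - q e.im| := this
        _ ≤ ε * |e.re| + ε * |e.im| := add_le_add hr hi
    nlinarith
  have h3 : |q a| ≤ (1 + ε) * M := by
    have h1' := hq a
    have h := abs_abs_sub_abs_le_abs_sub (q a) a
    nlinarith [abs_nonneg (q a), abs_nonneg a, le_abs_self (|q a| - |a|)]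
  calc Norm.norm ((a : ℂ) * e - (q a : ℂ) * qt)
      ≤ Norm.norm (((a : ℂ) - (q a : ℂ)) * e) + Norm.norm ((q a : ℂ) * (e - qt)) := by
        rw [hsplit]; exact norm_add_le _ _
    _ ≤ ε * M + (1 + ε) * M * (2 * ε) := by
        refine add_le_add h1 ?_
        rw [norm_mul, Complex.norm_real, Real.norm_eq_abs]
        have hq0 : (0:ℝ) ≤ |q a| := abs_nonneg _
        have he0 : (0:ℝ) ≤ Norm.norm (e - qt) := norm_nonneg _
        nlinarith
    _ ≤ 2 * (2 + ε) * ε * M := by nlinarith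

/-- Precision error of the corner-grid sum for the complex
Fourier integrand under a rounding map with relative error `ε`, applied to the
real and imaginary parts separately. -/
theorem cornerGrid_precision_error_complex
    (d m : ℕ) (hd : 0 < d) (hm : 0 < m)
    (ω : Fin d → ℝ) (ε M : ℝ) (hε : 0 < ε) (hM : 0 < M)
    (v : (Fin d → ℝ) → ℝ)
    (hBound : ∀ x ∈ Set.univ.pi fun _ : Fin d => Set.Icc (0:ℝ) 1, |v x| ≤ M)
    (q : ℝ → ℝ) (hq : ∀ x : ℝ, |q x - x| ≤ ε * |x|) :
    Norm.norm
      (((m : ℝ) ^ d)⁻¹ * (∑ i : Fin d → Fin m,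
          (v (fun k => (i k : ℝ) / m) : ℂ) *
            Complex.exp (2 * Real.pi * Complex.I *
              ((∑ k, ω k * ((i k : ℝ) / m) : ℝ) : ℂ))) -
        ((m : ℝ) ^ d)⁻¹ * (∑ i : Fin d → Fin m,
          (q (v (fun k => (i k : ℝ) / m)) : ℂ) *
            ((q ((Complex.exp (2 * Real.pi * Complex.I *
                ((∑ k, ω k * ((i k : ℝ) / m) : ℝ) : ℂ))).re) : ℂ) +
              (q ((Complex.exp (2 * Real.pi * Complex.I *
                ((∑ k, ω k * ((i k : ℝ) / m) : ℝ) : ℂ))).im) : ℂ) * Complex.I))) ≤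
    2 * (2 + ε) * ε * M := by
  set C := 2 * (2 + ε) * ε * M with hC
  have hCpos : 0 ≤ C := by positivity
  have hterm : ∀ i : Fin d → Fin m,
      Norm.norm
        ((v (fun k => (i k : ℝ) / m) : ℂ) *
            Complex.exp (2 * Real.pi * Complex.I *
              ((∑ k, ω k * ((i k : ℝ) / m) : ℝ) : ℂ)) -
          (q (v (fun k => (i k : ℝ) / m)) : ℂ) *
            ((q ((Complex.exp (2 * Real.pi * Complex.I *
                ((∑ k, ω k * ((i k : ℝ) / m) : ℝ) : ℂ))).re) : ℂ) +
              (q ((Complex.exp (2 * Real.pi * Complex.I *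
                ((∑ k, ω k * ((i k : ℝ) / m) : ℝ) : ℂ))).im) : ℂ) * Complex.I)) ≤ C := by
    intro i
    apply term_bound_aux ε M hε hM q hq
    apply hBound
    intro k _
    constructor
    · positivity
    · rw [div_le_one (by exact_mod_cast hm)]
      exact_mod_cast (i k).2.le
  rw [← mul_sub, ← Finset.sum_sub_distrib, norm_mul, Complex.norm_real, Real.norm_eq_abs]
  have hm' : (0:ℝ) < (m : ℝ) ^ d := by positivity
  rw [abs_inv, abs_of_pos hm']
  refine le_trans (mul_le_mul_of_nonneg_left
    (le_trans (norm_sum_le _ _) (Finset.sum_le_sum fun i _ => hterm i))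
    (by positivity)) ?_
  rw [Finset.sum_const, Finset.card_univ, Fintype.card_fun, nsmul_eq_mul]
  simp only [Fintype.card_fin]
  push_cast
  rw [inv_mul_cancel_left₀ (ne_of_gt hm')]
end
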